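/- Fix positive integers $y$ and $N$. Let $x_1, x_2, \ldots$ be sampled uniformly and independently from the integer interval $[\lceil N/4 \rceil, \lceil N/3 \rceil] \cap \mathbb{N}$. Then the probability that there exists an index $j$ with $\sum_{i \le j} x_i = y$ is at most $100/N$. -/

import Mathlib

open MeasureTheory ProbabilityTheory
open scoped ENNReal

/-- Fix positive integers `y, N`. If `x 0, x 1, …` are i.i.d. uniform on the set of
integers in `[⌈N/4⌉, ⌈N/3⌉]`, then the probability that some partial sum
`x 0 + ⋯ + x j` equals `y` is at most `100 / N`. -/
theorem stmt_1 {Ω : Type*} [MeasurableSpace Ω] (μ : Measure Ω) [IsProbabilityMeasure μ]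
    (y N : ℕ) (hy : 0 < y) (hN : 0 < N)
    (x : ℕ → Ω → ℕ) (hmeas : ∀ i, Measurable (x i))
    (hindep : iIndepFun x μ)
    (hunif : ∀ i, μ.map (x i) =
      uniformOn (↑(Finset.Icc ⌈(N : ℝ) / 4⌉₊ ⌈(N : ℝ) / 3⌉₊))) :
    μ {ω | ∃ j : ℕ, (∑ i ∈ Finset.range (j + 1), x i ω) = y}
      ≤ ENNReal.ofReal (100 / N) := by
  classical
  by_cases hN100 : N ≤ 100
  · refine le_trans prob_le_one ?_
    rw [ENNReal.one_le_ofReal]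
    rw [le_div_iff₀ (by positivity)]
    have : (N : ℝ) ≤ 100 := by exact_mod_cast hN100
    linarith
  push_neg at hN100
  have hN101 : (101 : ℝ) ≤ N := by exact_mod_cast hN100
  set a := ⌈(N : ℝ) / 4⌉₊ with ha_def
  set b := ⌈(N : ℝ) / 3⌉₊ with hb_def
  set s0 := Finset.Icc a b with hs0_def
  set k := s0.card with hk_def
  -- basic real estimates
  have haN : (N : ℝ) / 4 ≤ a := Nat.le_ceil _
  have hbN : (N : ℝ) / 3 ≤ b := Nat.le_ceil _
  have haN' : (a : ℝ) < N / 4 + 1 := Nat.ceil_lt_add_one (by positivity)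
  have hbN' : (b : ℝ) < N / 3 + 1 := Nat.ceil_lt_add_one (by positivity)
  have hab : a ≤ b := by
    have : (a : ℝ) < (b : ℝ) + 1 := by linarith
    exact_mod_cast Nat.lt_add_one_iff.mp (by exact_mod_cast this)
  have ha1 : 1 ≤ a := by
    have : (0 : ℝ) < a := by linarith
    exact_mod_cast Nat.succ_le_of_lt (by exact_mod_cast this)
  have hk_card : k = b + 1 - a := by rw [hk_def, hs0_def, Nat.card_Icc]
  have hk_real : (N : ℝ) / 12 ≤ k := by
    have : (k : ℝ) = (b : ℝ) + 1 - a := by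
      rw [hk_card]
      have : a ≤ b + 1 := le_trans hab (Nat.le_succ _)
      push_cast [Nat.cast_sub this]
      ring
    rw [this]; linarith
  have hk_pos : 0 < k := by
    have : (0 : ℝ) < k := lt_of_lt_of_le (by linarith) hk_real
    exact_mod_cast this
  have hba : b + 1 ≤ 2 * a := by
    have : (b : ℝ) < 2 * a := by linarith
    have h2 : b < 2 * a := by exact_mod_cast this
    omega
  -- the clipped variables
  set clip : ℕ → ℕ := fun v => min b (max a v) with hclip_def
  set x' : ℕ → Ω → ℕ := fun i ω => clip (x i ω) with hx'_def
  have hx'meas : ∀ i, Measurable (x' i) := fun i => (measurable_from_top : Measurable clip).comp (hmeas i)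
  have hx'mem : ∀ i ω, a ≤ x' i ω ∧ x' i ω ≤ b := by
    intro i ω
    constructor
    · exact le_min (hab) (le_max_left _ _) |>.trans_eq rfl
    · exact min_le_left _ _
  have hindep' : iIndepFun x' μ :=
    hindep.comp (fun _ => clip) (fun _ => measurable_from_top)
  -- each x i lies in s0 almost surely
  have hbad : ∀ i, μ (x i ⁻¹' (↑s0)ᶜ) = 0 := by
    intro i
    rw [← Measure.map_apply (hmeas i) (MeasurableSet.compl s0.measurableSet), hunif i]
    rw [uniformOn_eq_zero_iff (s0.finite_toSet)]
    simp
  -- singleton bound for x'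
  have hsingle : ∀ i t, μ (x' i ⁻¹' {t}) ≤ (k : ℝ≥0∞)⁻¹ := by
    intro i t
    have hsub : x' i ⁻¹' {t} ⊆ x i ⁻¹' {t} ∪ x i ⁻¹' (↑s0)ᶜ := by
      intro ω hω
      by_cases h : x i ω ∈ s0
      · left
        have := Finset.mem_Icc.mp h
        have : x' i ω = x i ω := by
          simp only [hx'_def, hclip_def]
          omega
        simpa [← this] using hω
      · right; simpa using h
    calc μ (x' i ⁻¹' {t}) ≤ μ (x i ⁻¹' {t} ∪ x i ⁻¹' (↑s0)ᶜ) := measure_mono hsub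
      _ ≤ μ (x i ⁻¹' {t}) + μ (x i ⁻¹' (↑s0)ᶜ) := measure_union_le _ _
      _ = μ (x i ⁻¹' {t}) := by rw [hbad i, add_zero]
      _ ≤ (k : ℝ≥0∞)⁻¹ := by
          rw [← Measure.map_apply (hmeas i) (measurableSet_singleton t), hunif i]
          rw [show uniformOn (↑s0 : Set ℕ) = Measure.count[|↑s0] from rfl,
            cond_apply s0.measurableSet, Measure.count_apply_finset]
          calc (↑k : ℝ≥0∞)⁻¹ * Measure.count (↑s0 ∩ {t})
              ≤ (↑k : ℝ≥0∞)⁻¹ * Measure.count {t} :=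
                mul_le_mul_right (measure_mono Set.inter_subset_right) _
            _ = (↑k : ℝ≥0∞)⁻¹ := by rw [Measure.count_singleton, mul_one]
  -- partial sums of clipped variables
  set S : ℕ → Ω → ℕ := fun j ω => ∑ i ∈ Finset.range j, x' i ω with hS_def
  have hSmeas : ∀ j, Measurable (S j) := fun j => by
    apply Finset.measurable_sum
    intro i _
    exact hx'meas i
  -- reduction to clipped event
  have hreduce : μ {ω | ∃ j : ℕ, (∑ i ∈ Finset.range (j + 1), x i ω) = y}
      ≤ μ {ω | ∃ j : ℕ, S (j + 1) ω = y} := by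
    have hsub : {ω | ∃ j : ℕ, (∑ i ∈ Finset.range (j + 1), x i ω) = y}
        ⊆ {ω | ∃ j : ℕ, S (j + 1) ω = y} ∪ ⋃ i, x i ⁻¹' (↑s0)ᶜ := by
      intro ω hω
      by_cases hG : ∀ i, x i ω ∈ s0
      · left
        obtain ⟨j, hj⟩ := hω
        refine ⟨j, ?_⟩
        rw [hS_def]
        have : ∀ i, x' i ω = x i ω := by
          intro i
          have := Finset.mem_Icc.mp (hG i)
          simp only [hx'_def, hclip_def]
          omega
        simp only [this]
        exact hj
      · right
        push_neg at hG
        obtain ⟨i, hi⟩ := hG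
        exact Set.mem_iUnion.mpr ⟨i, by simpa using hi⟩
    calc μ _ ≤ μ ({ω | ∃ j : ℕ, S (j + 1) ω = y} ∪ ⋃ i, x i ⁻¹' (↑s0)ᶜ) := measure_mono hsub
      _ ≤ μ {ω | ∃ j : ℕ, S (j + 1) ω = y} + μ (⋃ i, x i ⁻¹' (↑s0)ᶜ) := measure_union_le _ _
      _ = μ {ω | ∃ j : ℕ, S (j + 1) ω = y} := by
          have : μ (⋃ i, x i ⁻¹' (↑s0)ᶜ) = 0 := by
            refine measure_iUnion_null fun i => hbad i
          rw [this, add_zero]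
  -- the landing window
  set T := Finset.Icc (y - b) (y - a) with hT_def
  set D : ℕ → Set Ω := fun j => S (j + 1) ⁻¹' ↑T with hD_def
  -- per-step bound for j ≥ 1
  have hstep_bound : ∀ j : ℕ, μ {ω | S (j + 2) ω = y} ≤ (k : ℝ≥0∞)⁻¹ * μ (D j) := by
    intro j
    have hsub : {ω | S (j + 2) ω = y}
        ⊆ ⋃ s ∈ T, (S (j + 1) ⁻¹' {s} ∩ x' (j + 1) ⁻¹' {y - s}) := by
      intro ω hω
      simp only [Set.mem_setOf_eq] at hω
      have hsum : S (j + 2) ω = S (j + 1) ω + x' (j + 1) ω := by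
        rw [hS_def]; exact Finset.sum_range_succ _ _
      have hx := hx'mem (j + 1) ω
      refine Set.mem_biUnion (show S (j + 1) ω ∈ T from ?_) ?_
      · rw [hT_def, Finset.mem_Icc]; omega
      · exact ⟨rfl, by simp only [Set.mem_preimage, Set.mem_singleton_iff]; omega⟩
    have hindep_j : IndepFun (S (j + 1)) (x' (j + 1)) μ := by
      have := hindep'.indepFun_finset_sum_of_notMem hx'meas
        (Finset.notMem_range_self (n := j + 1))
      convert this using 1
      ext ω
      simp [hS_def]
    calc μ {ω | S (j + 2) ω = y}
        ≤ ∑ s ∈ T, μ (S (j + 1) ⁻¹' {s} ∩ x' (j + 1) ⁻¹' {y - s}) :=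
          le_trans (measure_mono hsub) (measure_biUnion_finset_le _ _)
      _ = ∑ s ∈ T, μ (S (j + 1) ⁻¹' {s}) * μ (x' (j + 1) ⁻¹' {y - s}) := by
          refine Finset.sum_congr rfl fun s _ => ?_
          exact hindep_j.measure_inter_preimage_eq_mul _ _
            (measurableSet_singleton _) (measurableSet_singleton _)
      _ ≤ ∑ s ∈ T, μ (S (j + 1) ⁻¹' {s}) * (k : ℝ≥0∞)⁻¹ := by
          refine Finset.sum_le_sum fun s _ => ?_
          exact mul_le_mul_right (hsingle _ _) _
      _ = (k : ℝ≥0∞)⁻¹ * ∑ s ∈ T, μ (S (j + 1) ⁻¹' {s}) := by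
          rw [← Finset.sum_mul, mul_comm]
      _ = (k : ℝ≥0∞)⁻¹ * μ (D j) := by
          congr 1
          simp only [hD_def]
          have : S (j + 1) ⁻¹' ↑T = ⋃ s ∈ T, S (j + 1) ⁻¹' {s} := by
            ext ω; simp
          rw [this, measure_biUnion_finset]
          · intro s _ t _ hst
            refine Set.disjoint_left.mpr fun ω hs ht => ?_
            simp only [Set.mem_preimage, Set.mem_singleton_iff] at hs ht
            exact hst (hs ▸ ht ▸ rfl)
          · intro s _
            exact (hSmeas _) (measurableSet_singleton _)
  -- monotone growth of S
  have hgrow : ∀ ω, ∀ j j' : ℕ, j < j' → S (j + 1) ω + a ≤ S (j' + 1) ω := by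
    intro ω j j' hjj
    have heq : S (j + 1) ω + ∑ i ∈ Finset.Ico (j + 1) (j' + 1), x' i ω = S (j' + 1) ω :=
      Finset.sum_range_add_sum_Ico (fun i => x' i ω) (by omega : j + 1 ≤ j' + 1)
    rw [← heq]
    have hle : a ≤ ∑ i ∈ Finset.Ico (j + 1) (j' + 1), x' i ω := by
      calc a ≤ x' (j + 1) ω := (hx'mem _ _).1
        _ ≤ ∑ i ∈ Finset.Ico (j + 1) (j' + 1), x' i ω :=
          Finset.single_le_sum (f := fun i => x' i ω) (fun i _ => Nat.zero_le _)
            (Finset.mem_Ico.mpr ⟨le_refl _, by omega⟩)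
    omega
  -- the D j are pairwise disjoint
  have hdisj : Pairwise (Function.onFun Disjoint D) := by
    intro j j' hjj
    wlog h : j < j' generalizing j j'
    · exact (this hjj.symm (by omega)).symm
    refine Set.disjoint_left.mpr fun ω hj hj' => ?_
    simp only [hD_def, Set.mem_preimage, Finset.coe_Icc, Set.mem_Icc, hT_def,
      Finset.coe_Icc] at hj hj'
    have := hgrow ω j j' h
    omega
  have hDsum : ∑' j, μ (D j) ≤ 1 := by
    rw [← measure_iUnion hdisj (fun j => (hSmeas _) T.measurableSet)]
    exact prob_le_one
  -- split off the first term
  have hsplit : μ {ω | ∃ j : ℕ, S (j + 1) ω = y}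
      ≤ μ (x' 0 ⁻¹' {y}) + ∑' j : ℕ, μ {ω | S (j + 2) ω = y} := by
    have hsub : {ω | ∃ j : ℕ, S (j + 1) ω = y}
        ⊆ x' 0 ⁻¹' {y} ∪ ⋃ j : ℕ, {ω | S (j + 2) ω = y} := by
      intro ω ⟨j, hj⟩
      rcases j with _ | j
      ·
        left
        simp only [Set.mem_preimage, Set.mem_singleton_iff]
        rw [← hj, hS_def]
        simp
      ·
        right
        exact Set.mem_iUnion.mpr ⟨j, hj⟩
    calc μ _ ≤ μ (x' 0 ⁻¹' {y} ∪ ⋃ j : ℕ, {ω | S (j + 2) ω = y}) := measure_mono hsub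
      _ ≤ μ (x' 0 ⁻¹' {y}) + μ (⋃ j : ℕ, {ω | S (j + 2) ω = y}) := measure_union_le _ _
      _ ≤ μ (x' 0 ⁻¹' {y}) + ∑' j : ℕ, μ {ω | S (j + 2) ω = y} :=
          add_le_add_right (measure_iUnion_le _) _
  -- put it together: μ E ≤ 2 / k
  have htotal : μ {ω | ∃ j : ℕ, (∑ i ∈ Finset.range (j + 1), x i ω) = y}
      ≤ 2 * (k : ℝ≥0∞)⁻¹ := by
    calc μ _ ≤ μ {ω | ∃ j : ℕ, S (j + 1) ω = y} := hreduce
      _ ≤ μ (x' 0 ⁻¹' {y}) + ∑' j : ℕ, μ {ω | S (j + 2) ω = y} := hsplit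
      _ ≤ (k : ℝ≥0∞)⁻¹ + ∑' j : ℕ, (k : ℝ≥0∞)⁻¹ * μ (D j) := by
          refine add_le_add (hsingle 0 y) (ENNReal.tsum_le_tsum fun j => hstep_bound j)
      _ = (k : ℝ≥0∞)⁻¹ + (k : ℝ≥0∞)⁻¹ * ∑' j : ℕ, μ (D j) := by rw [ENNReal.tsum_mul_left]
      _ ≤ (k : ℝ≥0∞)⁻¹ + (k : ℝ≥0∞)⁻¹ * 1 := by
          exact add_le_add_right (mul_le_mul_right hDsum _) _
      _ = 2 * (k : ℝ≥0∞)⁻¹ := by ring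
  refine htotal.trans ?_
  -- final numeric bound: 2/k ≤ 100/N
  have hkR : (0 : ℝ) < k := by positivity
  have h2k : 2 * ((k : ℝ))⁻¹ ≤ 100 / N := by
    rw [div_eq_mul_inv]
    have h1 : ((k : ℝ))⁻¹ ≤ 12 / N := by
      rw [inv_le_iff_one_le_mul₀ hkR] at *
      · rw [div_mul_eq_mul_div, le_div_iff₀ (by positivity)]
        nlinarith
    have h2 : (0 : ℝ) < (N : ℝ)⁻¹ := by positivity
    calc 2 * ((k : ℝ))⁻¹ ≤ 2 * (12 / N) := by linarith
      _ ≤ 100 * (N : ℝ)⁻¹ := by rw [div_eq_mul_inv]; nlinarith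
  calc 2 * (k : ℝ≥0∞)⁻¹ = ENNReal.ofReal (2 * ((k : ℝ))⁻¹) := by
        rw [ENNReal.ofReal_mul (by norm_num), ENNReal.ofReal_inv_of_pos hkR,
          ENNReal.ofReal_natCast, ENNReal.ofReal_ofNat]
    _ ≤ ENNReal.ofReal (100 / N) := ENNReal.ofReal_le_ofReal h2k
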